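/- Let k ≥ 2, s ≥ 1. For the family B(n,k,s) = {F ∈ C([n],k) : F ∩ [s] ≠ ∅}, as n → ∞ with k, s fixed, co₂(B(n,k,s)) = s·k·(k-1)·C(n,k)·(1 + o(1)). -/

import Mathlib

open Filter Finset

lemma tendsto_ratio (c d : ℝ) :
    Tendsto (fun n : ℕ => ((n:ℝ)+c)/((n:ℝ)+d)) atTop (nhds 1) := by
  have hd : Tendsto (fun n : ℕ => (n:ℝ)+d) atTop atTop :=
    tendsto_atTop_add_const_right _ d tendsto_natCast_atTop_atTop
  have h0 : Tendsto (fun n : ℕ => (c-d)/((n:ℝ)+d)) atTop (nhds 0) :=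
    Tendsto.div_atTop tendsto_const_nhds hd
  have h1 : Tendsto (fun n : ℕ => 1 + (c-d)/((n:ℝ)+d)) atTop (nhds 1) := by
    simpa using tendsto_const_nhds.add h0
  refine h1.congr' ?_
  filter_upwards [hd.eventually_ne_atTop 0] with n hn
  field_simp
  ring

lemma tendsto_inv0 (c : ℝ) :
    Tendsto (fun n : ℕ => 1/((n:ℝ)+c)) atTop (nhds 0) :=
  Tendsto.div_atTop tendsto_const_nhds
    (tendsto_atTop_add_const_right _ c tendsto_natCast_atTop_atTop)

lemma tendsto_prod_one (s : ℕ) (m : ℕ) :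
    Tendsto (fun n : ℕ => ∏ i ∈ range m, (((n:ℝ)-s-i)/((n:ℝ)-i))) atTop (nhds 1) := by
  have : Tendsto (fun n : ℕ => ∏ i ∈ range m, (((n:ℝ)-s-i)/((n:ℝ)-i))) atTop
      (nhds (∏ i ∈ range m, (1:ℝ))) := by
    refine tendsto_finset_prod _ fun i _ => ?_
    have := tendsto_ratio (-(s:ℝ)-i) (-(i:ℝ))
    refine this.congr fun n => by ring_nf
  simpa using this

lemma key_tendsto (s : ℕ) (c : ℝ) : ∀ m : ℕ,
    Tendsto (fun n : ℕ => ((n:ℝ)+c) * (1 - ∏ i ∈ range m, (((n:ℝ)-s-i)/((n:ℝ)-i))))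
      atTop (nhds (m*s)) := by
  intro m
  induction m with
  | zero => simpa using tendsto_const_nhds
  | succ m ih =>
    have hg := tendsto_prod_one s m
    have hr : Tendsto (fun n : ℕ => (s:ℝ)*(((n:ℝ)+c)/((n:ℝ)-m))) atTop (nhds s) := by
      simpa [← sub_eq_add_neg] using tendsto_const_nhds.mul (tendsto_ratio c (-(m:ℝ)))
    have h2 : Tendsto (fun n : ℕ =>
        ((n:ℝ)+c)*(1 - ∏ i ∈ range m, (((n:ℝ)-s-i)/((n:ℝ)-i)))
        + (∏ i ∈ range m, (((n:ℝ)-s-i)/((n:ℝ)-i))) * ((s:ℝ)*(((n:ℝ)+c)/((n:ℝ)-m))))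
        atTop (nhds ((m*s) + 1*(s:ℝ))) := ih.add (hg.mul hr)
    have hcast : ((m:ℝ)*s + 1*(s:ℝ)) = (((m+1:ℕ)):ℝ)*s := by push_cast; ring
    rw [hcast] at h2
    refine Tendsto.congr' ?_ h2
    filter_upwards [eventually_gt_atTop m] with n hn
    have hnm : (n:ℝ) - m ≠ 0 := by
      have : (m:ℝ) < n := by exact_mod_cast hn
      linarith
    have hD1 : (∏ i ∈ range m, ((n:ℝ)-i)) ≠ 0 := by
      refine Finset.prod_ne_zero_iff.2 fun i hi => ?_
      have hi' : (i:ℝ) < n := by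
        exact_mod_cast lt_trans (Finset.mem_range.1 hi) hn
      linarith
    rw [Finset.prod_range_succ]
    simp only [Finset.prod_div_distrib]
    field_simp
    ring

lemma count_insert {n : ℕ} (E : Finset (Fin n)) (m : ℕ) (hE : E.card = m)
    (P : Finset (Fin n) → Prop) [DecidablePred P] :
    (((Finset.univ.powersetCard (m+1)).filter P).filter fun A => E ⊆ A).card
      = (Finset.univ.filter fun x => x ∉ E ∧ P (insert x E)).card := by
  symm
  apply Finset.card_bij (fun x _ => insert x E)
  · intro x hx
    simp only [Finset.mem_filter, Finset.mem_univ, true_and] at hx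
    simp only [Finset.mem_filter, Finset.mem_powersetCard]
    exact ⟨⟨⟨Finset.subset_univ _, by rw [Finset.card_insert_of_notMem hx.1, hE]⟩, hx.2⟩,
      Finset.subset_insert _ _⟩
  · intro x hx y hy h
    simp only [Finset.mem_filter, Finset.mem_univ, true_and] at hx hy
    have : x ∈ insert y E := h ▸ Finset.mem_insert_self x E
    rcases Finset.mem_insert.1 this with h1 | h1
    · exact h1
    · exact absurd h1 hx.1
  · intro A hA
    simp only [Finset.mem_filter, Finset.mem_powersetCard] at hA
    obtain ⟨⟨⟨-, hAcard⟩, hP⟩, hEA⟩ := hA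
    have hcd : (A \ E).card = 1 := by
      rw [Finset.card_sdiff_of_subset hEA, hAcard, hE]; omega
    obtain ⟨x, hx⟩ := Finset.card_eq_one.1 hcd
    have hxA : x ∈ A \ E := hx ▸ Finset.mem_singleton_self x
    rw [Finset.mem_sdiff] at hxA
    have hAx : insert x E = A := by
      apply Finset.eq_of_subset_of_card_le
      · exact Finset.insert_subset hxA.1 hEA
      · rw [hAcard, Finset.card_insert_of_notMem hxA.2, hE]
    refine ⟨x, ?_, hAx⟩
    simp only [Finset.mem_filter, Finset.mem_univ, true_and]
    exact ⟨hxA.2, by rwa [hAx]⟩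

lemma sum_closed (k s n : ℕ) (hk : 2 ≤ k) (hs : 1 ≤ s) (hn : k + s ≤ n) :
    (∑ E ∈ Finset.univ.powersetCard (k - 1),
        ((((Finset.univ.powersetCard k).filter fun A : Finset (Fin n) =>
            (A ∩ (Finset.univ.filter fun v : Fin n => (v : ℕ) < s)).Nonempty).filter
              fun A => E ⊆ A).card) ^ 2)
    = (n.choose (k-1) - (n-s).choose (k-1)) * (n-k+1)^2 + (n-s).choose (k-1) * s^2 := by
  set S : Finset (Fin n) := Finset.univ.filter fun v : Fin n => (v : ℕ) < s with hSdef
  have hsn : s < n := by omega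
  have hS : S.card = s := by
    have : S = Finset.Iio (⟨s, hsn⟩ : Fin n) := by
      ext v; simp [hSdef, Fin.lt_def]
    rw [this, Fin.card_Iio]
  have hSc : Sᶜ.card = n - s := by
    rw [Finset.card_compl, hS, Fintype.card_fin]
  -- inner count
  have hcount : ∀ E ∈ Finset.univ.powersetCard (k-1),
      (((Finset.univ.powersetCard k).filter fun A : Finset (Fin n) =>
          (A ∩ S).Nonempty).filter fun A => E ⊆ A).card
        = if (E ∩ S).Nonempty then n - k + 1 else s := by
    intro E hE
    rw [Finset.mem_powersetCard] at hE
    have hk1 : k - 1 + 1 = k := by omega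
    have := count_insert E (k-1) hE.2 (fun A => (A ∩ S).Nonempty)
    rw [hk1] at this
    rw [this]
    by_cases hES : (E ∩ S).Nonempty
    · rw [if_pos hES]
      obtain ⟨y, hy⟩ := hES
      rw [Finset.mem_inter] at hy
      have : (Finset.univ.filter fun x => x ∉ E ∧ ((insert x E) ∩ S).Nonempty) = Eᶜ := by
        ext x
        simp only [Finset.mem_filter, Finset.mem_univ, true_and, Finset.mem_compl]
        refine ⟨fun h => h.1, fun h => ⟨h, ⟨y, Finset.mem_inter.2 ⟨Finset.mem_insert_of_mem hy.1, hy.2⟩⟩⟩⟩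
      rw [this, Finset.card_compl, hE.2, Fintype.card_fin]
      omega
    · rw [if_neg hES]
      have hES' : E ∩ S = ∅ := Finset.not_nonempty_iff_eq_empty.1 hES
      have : (Finset.univ.filter fun x => x ∉ E ∧ ((insert x E) ∩ S).Nonempty) = S := by
        ext x
        simp only [Finset.mem_filter, Finset.mem_univ, true_and]
        constructor
        · rintro ⟨hxE, y, hy⟩
          rw [Finset.mem_inter] at hy
          rcases Finset.mem_insert.1 hy.1 with h1 | h1
          · exact h1 ▸ hy.2
          · exact absurd (Finset.mem_inter.2 ⟨h1, hy.2⟩) (by simp [hES'])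
        · intro hxS
          have hxE : x ∉ E := fun h => by
            have : x ∈ E ∩ S := Finset.mem_inter.2 ⟨h, hxS⟩
            simp [hES'] at this
          exact ⟨hxE, ⟨x, Finset.mem_inter.2 ⟨Finset.mem_insert_self _ _, hxS⟩⟩⟩
      rw [this, hS]
  -- split the sum
  rw [Finset.sum_congr rfl fun E hE => by rw [hcount E hE]]
  rw [← Finset.sum_filter_add_sum_filter_not (Finset.univ.powersetCard (k-1))
        (fun E => (E ∩ S).Nonempty)]
  have hnotcard : ((Finset.univ.powersetCard (k-1)).filter
      (fun E : Finset (Fin n) => ¬(E ∩ S).Nonempty)).card = (n-s).choose (k-1) := by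
    have : ((Finset.univ.powersetCard (k-1)).filter
        (fun E : Finset (Fin n) => ¬(E ∩ S).Nonempty)) = Sᶜ.powersetCard (k-1) := by
      ext E
      simp only [Finset.mem_filter, Finset.mem_powersetCard, Finset.subset_univ, true_and,
        Finset.not_nonempty_iff_eq_empty]
      constructor
      · rintro ⟨hcard, hempty⟩
        refine ⟨fun x hx => Finset.mem_compl.2 fun hxS => ?_, hcard⟩
        have : x ∈ E ∩ S := Finset.mem_inter.2 ⟨hx, hxS⟩
        simp [hempty] at this
      · rintro ⟨hsub, hcard⟩
        refine ⟨hcard, Finset.eq_empty_of_forall_notMem fun x hx => ?_⟩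
        rw [Finset.mem_inter] at hx
        exact Finset.mem_compl.1 (hsub hx.1) hx.2
    rw [this, Finset.card_powersetCard, hSc]
  have htot : (Finset.univ.powersetCard (k-1) : Finset (Finset (Fin n))).card
      = n.choose (k-1) := by
    rw [Finset.card_powersetCard, Finset.card_univ, Fintype.card_fin]
  have hposcard : ((Finset.univ.powersetCard (k-1)).filter
      (fun E : Finset (Fin n) => (E ∩ S).Nonempty)).card
      = n.choose (k-1) - (n-s).choose (k-1) := by
    have h := Finset.card_filter_add_card_filter_not
      (s := Finset.univ.powersetCard (k-1)) (fun E : Finset (Fin n) => (E ∩ S).Nonempty)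
    rw [hnotcard, htot] at h
    omega
  have e1 : ∀ E ∈ (Finset.univ.powersetCard (k-1)).filter
      (fun E : Finset (Fin n) => (E ∩ S).Nonempty),
      (if (E ∩ S).Nonempty then n - k + 1 else s) ^ 2 = (n - k + 1) ^ 2 :=
    fun E hE => by rw [if_pos (Finset.mem_filter.1 hE).2]
  have e2 : ∀ E ∈ (Finset.univ.powersetCard (k-1)).filter
      (fun E : Finset (Fin n) => ¬(E ∩ S).Nonempty),
      (if (E ∩ S).Nonempty then n - k + 1 else s) ^ 2 = s ^ 2 :=
    fun E hE => by rw [if_neg (Finset.mem_filter.1 hE).2]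
  rw [Finset.sum_congr rfl e1, Finset.sum_congr rfl e2, Finset.sum_const, Finset.sum_const,
    hposcard, hnotcard, smul_eq_mul, smul_eq_mul]

lemma cast_closed (k s n : ℕ) (hk : 2 ≤ k) (hs : 1 ≤ s) (hn : k + s ≤ n) :
    (((n.choose (k-1) - (n-s).choose (k-1)) * (n-k+1)^2 + (n-s).choose (k-1) * s^2 : ℕ) : ℝ) /
      ((s : ℝ) * k * ((k:ℝ) - 1) * (n.choose k : ℝ))
    = ((n:ℝ)-k+1) * (1 - ∏ i ∈ range (k-1), (((n:ℝ)-s-i)/((n:ℝ)-i))) / (s*((k:ℝ)-1))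
      + (s:ℝ) * (∏ i ∈ range (k-1), (((n:ℝ)-s-i)/((n:ℝ)-i))) / (((k:ℝ)-1)*((n:ℝ)-k+1)) := by
  set m := k - 1 with hm
  set X : ℝ := (n:ℝ) - k + 1 with hX
  set P1 : ℝ := ∏ i ∈ range m, ((n:ℝ)-i) with hP1
  set P2 : ℝ := ∏ i ∈ range m, ((n:ℝ)-s-i) with hP2
  have hf : ((m.factorial : ℕ) : ℝ) ≠ 0 := Nat.cast_ne_zero.2 m.factorial_ne_zero
  have hd1 : (n.choose m : ℝ) * m.factorial = P1 := by
    have h1 : n.descFactorial m = m.factorial * n.choose m :=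
      Nat.descFactorial_eq_factorial_mul_choose n m
    have h2 : ((n.descFactorial m : ℕ) : ℝ) = P1 := by
      rw [Nat.descFactorial_eq_prod_range, Nat.cast_prod]
      refine Finset.prod_congr rfl fun i hi => ?_
      have : i ≤ n := by have := Finset.mem_range.1 hi; omega
      push_cast [this]; ring
    rw [← h2, h1]; push_cast; ring
  have hd2 : ((n-s).choose m : ℝ) * m.factorial = P2 := by
    have h1 : (n-s).descFactorial m = m.factorial * (n-s).choose m :=
      Nat.descFactorial_eq_factorial_mul_choose _ m
    have h2 : (((n-s).descFactorial m : ℕ) : ℝ) = P2 := by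
      rw [Nat.descFactorial_eq_prod_range, Nat.cast_prod]
      refine Finset.prod_congr rfl fun i hi => ?_
      have hi' : i < m := Finset.mem_range.1 hi
      have h3 : i ≤ n - s := by omega
      have h4 : s ≤ n := by omega
      push_cast [h3, h4]; ring
    rw [← h2, h1]; push_cast; ring
  have hrel : (n.choose k : ℝ) * k = (n.choose m : ℝ) * X := by
    have h1 : n.choose (m+1) * (m+1) = n.choose m * (n - m) := Nat.choose_succ_right_eq n m
    have hm1 : m + 1 = k := by omega
    rw [hm1] at h1
    have : ((n.choose k * k : ℕ) : ℝ) = ((n.choose m * (n - m) : ℕ) : ℝ) := by rw [h1]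
    push_cast [show m ≤ n by omega] at this
    rw [this, hX, hm, Nat.cast_sub (by omega : 1 ≤ k)]
    push_cast; ring
  have hchle : (n-s).choose m ≤ n.choose m := Nat.choose_le_choose m (by omega)
  have hXpos : (0:ℝ) < X := by
    rw [hX]; have : (k:ℝ) ≤ n := by exact_mod_cast le_trans (by omega) hn
    linarith
  have hP1ne : P1 ≠ 0 := by
    refine Finset.prod_ne_zero_iff.2 fun i hi => ?_
    have : (i:ℝ) < n := by
      have := Finset.mem_range.1 hi
      exact_mod_cast by omega
    linarith
  have hgP : (∏ i ∈ range m, (((n:ℝ)-s-i)/((n:ℝ)-i))) = P2 / P1 := by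
    rw [Finset.prod_div_distrib]
  have hsne : (s:ℝ) ≠ 0 := Nat.cast_ne_zero.2 (by omega)
  have hkne : (k:ℝ) ≠ 0 := Nat.cast_ne_zero.2 (by omega)
  have hk1ne : (k:ℝ) - 1 ≠ 0 := by
    have : (2:ℝ) ≤ k := by exact_mod_cast hk
    linarith
  have e0 : (n.choose k : ℝ) = P1 * X / ((k:ℝ) * m.factorial) := by
    rw [eq_div_iff (by positivity)]
    calc (n.choose k : ℝ) * ((k:ℝ) * m.factorial)
        = ((n.choose k : ℝ) * k) * m.factorial := by ring
      _ = ((n.choose m : ℝ) * X) * m.factorial := by rw [hrel]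
      _ = ((n.choose m : ℝ) * m.factorial) * X := by ring
      _ = P1 * X := by rw [hd1]
  have e1 : (n.choose m : ℝ) = P1 / (m.factorial : ℝ) := by
    rw [eq_div_iff hf, hd1]
  have e2 : ((n-s).choose m : ℝ) = P2 / (m.factorial : ℝ) := by
    rw [eq_div_iff hf, hd2]
  rw [hgP]
  push_cast [hchle, show k ≤ n by omega]
  rw [e0, e1, e2]
  rw [show (n:ℝ) - k + 1 = X from rfl]
  field_simp

/-- Asymptotics of the codegree squared sum of `B(n,k,s)`: for fixed `k ≥ 2`, `s ≥ 1`,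
`co₂(B(n,k,s)) = s·k·(k-1)·C(n,k)·(1 + o(1))` as `n → ∞`, i.e. the ratio tends to `1`. -/
theorem co2_B_asymptotics (k s : ℕ) (hk : 2 ≤ k) (hs : 1 ≤ s) :
    Tendsto (fun n : ℕ =>
      ((∑ E ∈ Finset.univ.powersetCard (k - 1),
          ((((Finset.univ.powersetCard k).filter fun A : Finset (Fin n) =>
              (A ∩ (Finset.univ.filter fun v : Fin n => (v : ℕ) < s)).Nonempty).filter
                fun A => E ⊆ A).card) ^ 2 : ℕ) : ℝ) /
        ((s : ℝ) * k * (k - 1) * (n.choose k : ℝ)))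
      atTop (nhds 1) := by
  have hsne : (s:ℝ) ≠ 0 := Nat.cast_ne_zero.2 (by omega)
  have hk1ne : (k:ℝ) - 1 ≠ 0 := by
    have : (2:ℝ) ≤ k := by exact_mod_cast hk
    linarith
  have hterm1 : Tendsto (fun n : ℕ =>
      ((n:ℝ)-k+1) * (1 - ∏ i ∈ range (k-1), (((n:ℝ)-s-i)/((n:ℝ)-i))) / ((s:ℝ)*((k:ℝ)-1)))
      atTop (nhds 1) := by
    have hkey := (key_tendsto s (1 - (k:ℝ)) (k-1)).div_const ((s:ℝ)*((k:ℝ)-1))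
    have hval : (((k-1:ℕ)):ℝ) * s / ((s:ℝ)*((k:ℝ)-1)) = 1 := by
      rw [Nat.cast_sub (by omega : 1 ≤ k)]
      push_cast
      field_simp
    rw [hval] at hkey
    refine hkey.congr fun n => ?_
    rw [show ((n:ℝ) + (1 - (k:ℝ))) = ((n:ℝ) - k + 1) from by ring]
  have hD : Tendsto (fun n : ℕ => ((k:ℝ)-1)*((n:ℝ)-k+1)) atTop atTop := by
    have h1 : Tendsto (fun n : ℕ => (n:ℝ)-k+1) atTop atTop := by
      have := tendsto_atTop_add_const_right atTop (1-(k:ℝ)) tendsto_natCast_atTop_atTop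
      refine this.congr fun n => by ring
    have h2 : (0:ℝ) < (k:ℝ)-1 := by
      have : (2:ℝ) ≤ k := by exact_mod_cast hk
      linarith
    exact h1.const_mul_atTop h2
  have h0 : Tendsto (fun n : ℕ => (s:ℝ)/(((k:ℝ)-1)*((n:ℝ)-k+1))) atTop (nhds 0) :=
    Tendsto.div_atTop tendsto_const_nhds hD
  have hterm2 : Tendsto (fun n : ℕ =>
      (s:ℝ) * (∏ i ∈ range (k-1), (((n:ℝ)-s-i)/((n:ℝ)-i))) / (((k:ℝ)-1)*((n:ℝ)-k+1)))
      atTop (nhds 0) := by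
    have := (tendsto_prod_one s (k-1)).mul h0
    rw [one_mul] at this
    refine this.congr fun n => by ring
  have hF := hterm1.add hterm2
  rw [add_zero] at hF
  refine Tendsto.congr' ?_ hF
  filter_upwards [eventually_ge_atTop (k+s)] with n hn
  rw [sum_closed k s n hk hs hn]
  exact (cast_closed k s n hk hs hn).symm
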